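/- Let γ > 1, β > 0, and let g : [0,∞) → [0,∞) be a function such that for every k ≥ 1 and every t ≥ β^{-1} log 2 one has g(t)^{γ^k} · (2β)^{-(γ^k−1)/(γ−1)} · ∏_{j=2}^k ((γ^j−1)/(γ−1))^{-γ^{k-j}} · e^{βt(γ^k−1)/(γ−1)} ≤ M for a fixed constant M. Then there is a constant C (depending on β, γ, M) such that g(t) ≤ C e^{-βt/(γ−1)} for all t ≥ β^{-1} log 2. -/

import Mathlib

open Real Finset

set_option maxHeartbeats 1000000 in
theorem stmt1 (γ β M : ℝ) (hγ : 1 < γ) (hβ : 0 < β)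
    (g : ℝ → ℝ) (hg : ∀ t, 0 ≤ g t)
    (hbound : ∀ k : ℕ, 1 ≤ k → ∀ t : ℝ, β⁻¹ * Real.log 2 ≤ t →
      g t ^ (γ ^ k) * (2 * β) ^ (-((γ ^ k - 1) / (γ - 1)))
        * (∏ j ∈ Finset.Icc 2 k, ((γ ^ j - 1) / (γ - 1)) ^ (-(γ ^ (k - j))))
        * Real.exp (β * t * (γ ^ k - 1) / (γ - 1)) ≤ M) :
    ∃ C : ℝ, ∀ t : ℝ, β⁻¹ * Real.log 2 ≤ t →
      g t ≤ C * Real.exp (-(β * t) / (γ - 1)) := by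
  have hγ0 : 0 < γ := lt_trans one_pos hγ
  have hγ1 : 0 < γ - 1 := by linarith
  set c : ℝ := max γ (γ - 1)⁻¹ with hc
  have hc1 : 1 < c := lt_of_lt_of_le hγ (le_max_left _ _)
  have hlogc : 0 ≤ Real.log c := Real.log_nonneg hc1.le
  have hinv : |γ⁻¹| < 1 := by
    rw [abs_of_pos (inv_pos.mpr hγ0)]
    exact inv_lt_one_of_one_lt₀ hγ
  have hsum : Summable (fun j : ℕ => (j : ℝ) * γ⁻¹ ^ j) := by
    have := summable_pow_mul_geometric_of_norm_lt_one (R := ℝ) 1 (by rwa [Real.norm_eq_abs] : ‖γ⁻¹‖ < 1)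
    simpa using this
  set T : ℝ := ∑' j : ℕ, (j : ℝ) * γ⁻¹ ^ j with hT
  set K : ℝ := |Real.log M| + |Real.log (2 * β)| / (γ - 1) + 2 * Real.log c * T
      + 1 / (γ - 1) with hK
  refine ⟨Real.exp K, fun t ht => ?_⟩
  have ht0 : 0 < t := lt_of_lt_of_le (by positivity) ht
  rcases eq_or_lt_of_le (hg t) with h0 | hgt
  · rw [← h0]; positivity
  -- choose k
  obtain ⟨n, hn⟩ := pow_unbounded_of_one_lt (β * t) hγ
  set k : ℕ := max n 1 with hk
  have hk1 : 1 ≤ k := le_max_right _ _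
  have hbt : β * t ≤ γ ^ k :=
    le_trans hn.le (pow_le_pow_right₀ hγ.le (le_max_left _ _))
  have hγk1 : (1 : ℝ) ≤ γ ^ k := one_le_pow₀ hγ.le
  have hγkpos : (0 : ℝ) < γ ^ k := by positivity
  have hb := hbound k hk1 t ht
  -- positivity of factors
  have hbj : ∀ j ∈ Finset.Icc 2 k, (0 : ℝ) < (γ ^ j - 1) / (γ - 1) := by
    intro j hj
    have hj2 : 2 ≤ j := (Finset.mem_Icc.mp hj).1
    have h1 : (1 : ℝ) < γ ^ j := one_lt_pow₀ hγ (by omega)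
    exact div_pos (by linarith) hγ1
  have hP3 : (0 : ℝ) < ∏ j ∈ Finset.Icc 2 k, ((γ ^ j - 1) / (γ - 1)) ^ (-(γ ^ (k - j))) :=
    Finset.prod_pos fun j hj => Real.rpow_pos_of_pos (hbj j hj) _
  have hP1 : (0 : ℝ) < g t ^ (γ ^ k) := Real.rpow_pos_of_pos hgt _
  have hP2 : (0 : ℝ) < (2 * β) ^ (-((γ ^ k - 1) / (γ - 1))) :=
    Real.rpow_pos_of_pos (by linarith) _
  have hLpos : (0 : ℝ) < g t ^ (γ ^ k) * (2 * β) ^ (-((γ ^ k - 1) / (γ - 1)))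
        * (∏ j ∈ Finset.Icc 2 k, ((γ ^ j - 1) / (γ - 1)) ^ (-(γ ^ (k - j))))
        * Real.exp (β * t * (γ ^ k - 1) / (γ - 1)) := by positivity
  have hM : 0 < M := lt_of_lt_of_le hLpos hb
  have hlog := Real.log_le_log hLpos hb
  rw [Real.log_mul (by positivity) (Real.exp_ne_zero _),
      Real.log_mul (by positivity) (ne_of_gt hP3),
      Real.log_mul (ne_of_gt hP1) (ne_of_gt hP2),
      Real.log_exp, Real.log_rpow hgt, Real.log_rpow (by linarith : (0:ℝ) < 2 * β),
      Real.log_prod (fun j hj => ne_of_gt (Real.rpow_pos_of_pos (hbj j hj) _))] at hlog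
  rw [Finset.sum_congr rfl (fun j hj => Real.log_rpow (hbj j hj) (-(γ ^ (k - j))))] at hlog
  -- hlog : γ^k * log g + (-(..))*log(2β) + ∑ (-(γ^(k-j)))*log b_j + βt(γ^k-1)/(γ-1) ≤ log M
  set L : ℝ := Real.log (g t) with hL
  -- bound (2): ((γ^k-1)/(γ-1)) * log (2β) ≤ γ^k * (|log (2β)|/(γ-1))
  have h2 : ((γ ^ k - 1) / (γ - 1)) * Real.log (2 * β)
      ≤ γ ^ k * (|Real.log (2 * β)| / (γ - 1)) := by
    have key : (γ ^ k - 1) * Real.log (2 * β) ≤ γ ^ k * |Real.log (2 * β)| := by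
      nlinarith [le_abs_self (Real.log (2 * β)), abs_nonneg (Real.log (2 * β))]
    calc ((γ ^ k - 1) / (γ - 1)) * Real.log (2 * β)
        = ((γ ^ k - 1) * Real.log (2 * β)) / (γ - 1) := by ring
      _ ≤ (γ ^ k * |Real.log (2 * β)|) / (γ - 1) := by gcongr
      _ = γ ^ k * (|Real.log (2 * β)| / (γ - 1)) := by ring
  -- bound (1)
  have h1 : Real.log M ≤ γ ^ k * |Real.log M| := by
    nlinarith [le_abs_self (Real.log M), abs_nonneg (Real.log M)]
  -- bound (3): sum
  have h3 : ∑ j ∈ Finset.Icc 2 k, γ ^ (k - j) * Real.log ((γ ^ j - 1) / (γ - 1))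
      ≤ γ ^ k * (2 * Real.log c * T) := by
    have step : ∀ j ∈ Finset.Icc 2 k,
        γ ^ (k - j) * Real.log ((γ ^ j - 1) / (γ - 1))
          ≤ γ ^ k * (2 * Real.log c) * ((j : ℝ) * γ⁻¹ ^ j) := by
      intro j hj
      obtain ⟨hj2, hjk⟩ := Finset.mem_Icc.mp hj
      have hbpos := hbj j hj
      have hcγ : γ ≤ c := le_max_left _ _
      have hcinv : (γ - 1)⁻¹ ≤ c := le_max_right _ _
      have hble : (γ ^ j - 1) / (γ - 1) ≤ c ^ (2 * j) := by
        have e1 : (γ ^ j - 1) / (γ - 1) ≤ γ ^ j * (γ - 1)⁻¹ := by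
          rw [div_eq_mul_inv]
          have : (0:ℝ) < (γ-1)⁻¹ := inv_pos.mpr hγ1
          nlinarith [pow_pos hγ0 j]
        have e2 : γ ^ j * (γ - 1)⁻¹ ≤ c ^ j * c := 
          mul_le_mul (pow_le_pow_left₀ hγ0.le hcγ j) hcinv
            (inv_pos.mpr hγ1).le (pow_nonneg (by linarith) j)
        have e3 : c ^ j * c = c ^ (j + 1) := (pow_succ c j).symm
        have e4 : c ^ (j + 1) ≤ c ^ (2 * j) := pow_le_pow_right₀ hc1.le (by omega)
        linarith
      have hlogb : Real.log ((γ ^ j - 1) / (γ - 1)) ≤ 2 * (j : ℝ) * Real.log c := by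
        have := Real.log_le_log hbpos hble
        rw [Real.log_pow] at this
        push_cast at this
        linarith
      have hpow : γ ^ (k - j) = γ ^ k * γ⁻¹ ^ j := by
        rw [inv_pow, eq_mul_inv_iff_mul_eq₀ (pow_ne_zero j (ne_of_gt hγ0))]
        exact pow_sub_mul_pow γ hjk
      calc γ ^ (k - j) * Real.log ((γ ^ j - 1) / (γ - 1))
          ≤ γ ^ (k - j) * (2 * (j : ℝ) * Real.log c) := by
            exact mul_le_mul_of_nonneg_left hlogb (by positivity)
        _ = γ ^ k * (2 * Real.log c) * ((j : ℝ) * γ⁻¹ ^ j) := by rw [hpow]; ring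
    calc ∑ j ∈ Finset.Icc 2 k, γ ^ (k - j) * Real.log ((γ ^ j - 1) / (γ - 1))
        ≤ ∑ j ∈ Finset.Icc 2 k, γ ^ k * (2 * Real.log c) * ((j : ℝ) * γ⁻¹ ^ j) :=
          Finset.sum_le_sum step
      _ = γ ^ k * (2 * Real.log c) * ∑ j ∈ Finset.Icc 2 k, (j : ℝ) * γ⁻¹ ^ j := by
          rw [← Finset.mul_sum]
      _ ≤ γ ^ k * (2 * Real.log c) * T := by
          apply mul_le_mul_of_nonneg_left _ (by positivity)
          exact Summable.sum_le_tsum _ (fun j _ => by positivity) hsum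
      _ = γ ^ k * (2 * Real.log c * T) := by ring
  -- bound (4)
  have h4 : -(β * t * (γ ^ k - 1) / (γ - 1))
      ≤ γ ^ k * (1 / (γ - 1)) - γ ^ k * (β * t) / (γ - 1) := by
    have key : -(β * t * (γ ^ k - 1)) ≤ γ ^ k - γ ^ k * (β * t) := by nlinarith
    calc -(β * t * (γ ^ k - 1) / (γ - 1))
        = (-(β * t * (γ ^ k - 1))) / (γ - 1) := by ring
      _ ≤ (γ ^ k - γ ^ k * (β * t)) / (γ - 1) := by gcongr
      _ = γ ^ k * (1 / (γ - 1)) - γ ^ k * (β * t) / (γ - 1) := by ring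
  -- combine
  have hsumform : ∑ j ∈ Finset.Icc 2 k, -(γ ^ (k - j)) * Real.log ((γ ^ j - 1) / (γ - 1))
      = -∑ j ∈ Finset.Icc 2 k, γ ^ (k - j) * Real.log ((γ ^ j - 1) / (γ - 1)) := by
    rw [← Finset.sum_neg_distrib]
    exact Finset.sum_congr rfl fun j _ => by ring
  rw [hsumform] at hlog
  have hmain : γ ^ k * L ≤ γ ^ k * (K - β * t / (γ - 1)) := by
    have expand : γ ^ k * (K - β * t / (γ - 1))
        = γ ^ k * |Real.log M| + γ ^ k * (|Real.log (2 * β)| / (γ - 1))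
          + γ ^ k * (2 * Real.log c * T) + (γ ^ k * (1 / (γ - 1))
          - γ ^ k * (β * t) / (γ - 1)) := by rw [hK]; ring
    rw [expand]
    have : γ ^ k * L ≤ Real.log M + ((γ ^ k - 1) / (γ - 1)) * Real.log (2 * β)
        + (∑ j ∈ Finset.Icc 2 k, γ ^ (k - j) * Real.log ((γ ^ j - 1) / (γ - 1)))
        + -(β * t * (γ ^ k - 1) / (γ - 1)) := by linarith
    linarith
  have hLle : L ≤ K - β * t / (γ - 1) := le_of_mul_le_mul_left hmain hγkpos
  calc g t = Real.exp L := (Real.exp_log hgt).symm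
    _ ≤ Real.exp (K - β * t / (γ - 1)) := Real.exp_le_exp.mpr hLle
    _ = Real.exp K * Real.exp (-(β * t) / (γ - 1)) := by
        rw [← Real.exp_add, neg_div]; ring_nf
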